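/- arXiv:2203.09778 — 2 statements merged into one kernel-verified Lean document; each statement's English description precedes it below -/
import Mathlib

section
/- Let E be a number field (a finite extension of ℚ) acting ℚ-linearly on a finite-dimensional ℚ-vector space T, let ψ : T × T → ℚ be a non-degenerate ℚ-bilinear form, and suppose ψ(e·v, w) = ψ(v, e·w) for all e ∈ E and v, w ∈ T (totally real case). Then there exists a unique E-bilinear symmetric form φ : T × T → E such that ψ(v, w) = Tr_{E/ℚ}(φ(v, w)) for all v, w ∈ T. -/
/-- For a number field `E` acting on a finite-dimensional `ℚ`-vector space `T`
and a non-degenerate symmetric `ℚ`-bilinear form `ψ` satisfying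
`ψ(e·v, w) = ψ(v, e·w)`, there is a unique symmetric `E`-bilinear form `φ`
with `ψ = Tr_{E/ℚ} ∘ φ`. -/
theorem stmt2 (E : Type*) [Field E] [Algebra ℚ E] [FiniteDimensional ℚ E]
    (T : Type*) [AddCommGroup T] [Module ℚ T] [FiniteDimensional ℚ T]
    [Module E T] [IsScalarTower ℚ E T]
    (ψ : T →ₗ[ℚ] T →ₗ[ℚ] ℚ)
    (hsymm : ∀ v w : T, ψ v w = ψ w v)
    (hnd : ∀ v : T, (∀ w : T, ψ v w = 0) → v = 0)
    (hE : ∀ (e : E) (v w : T), ψ (e • v) w = ψ v (e • w)) :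
    ∃! φ : T →ₗ[E] T →ₗ[E] E,
      (∀ v w : T, φ v w = φ w v) ∧
      ∀ v w : T, ψ v w = Algebra.trace ℚ E (φ v w) := by
  classical
  set B : LinearMap.BilinForm ℚ E := Algebra.traceForm ℚ E with hBdef
  have hB : B.Nondegenerate := traceForm_nondegenerate ℚ E
  -- the functional e ↦ ψ (e • v) w
  let F : T → T → Module.Dual ℚ E := fun v w =>
    { toFun := fun e => ψ (e • v) w
      map_add' := fun a b => by simp [add_smul]
      map_smul' := fun q a => by simp [smul_assoc] }
  let φ0 : T → T → E := fun v w => (B.toDual hB).symm (F v w)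
  have hφ0 : ∀ v w e, Algebra.trace ℚ E (φ0 v w * e) = ψ (e • v) w := by
    intro v w e
    rw [← Algebra.traceForm_apply]
    exact LinearMap.BilinForm.apply_toDual_symm_apply (B := B) (hB := hB) (f := F v w) (v := e)
  have hinj : ∀ x y : E, (∀ e, Algebra.trace ℚ E (x * e) = Algebra.trace ℚ E (y * e)) → x = y := by
    intro x y h
    have h0 : ∀ e, B (x - y) e = 0 := by
      intro e
      simp only [hBdef, Algebra.traceForm_apply, sub_mul, map_sub, LinearMap.sub_apply]
      rw [h e]; ring
    exact sub_eq_zero.mp (hB.1 _ h0)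
  -- characterization
  have hchar : ∀ v w (x : E), (∀ e, Algebra.trace ℚ E (x * e) = ψ (e • v) w) → x = φ0 v w :=
    fun v w x hx => hinj _ _ (fun e => by rw [hx e, hφ0])
  -- bilinearity properties of φ0
  have haddl : ∀ v v' w, φ0 (v + v') w = φ0 v w + φ0 v' w := by
    intro v v' w
    refine ((hchar (v + v') w _ ?_)).symm
    intro e
    simp [add_mul, smul_add, hφ0]
  have hsmull : ∀ (c : E) v w, φ0 (c • v) w = c * φ0 v w := by
    intro c v w
    refine ((hchar (c • v) w _ ?_)).symm
    intro e
    have h : c * φ0 v w * e = φ0 v w * (e * c) := by ring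
    rw [h, hφ0, mul_smul]
  have haddr : ∀ v w w', φ0 v (w + w') = φ0 v w + φ0 v w' := by
    intro v w w'
    refine ((hchar v (w + w') _ ?_)).symm
    intro e
    simp [add_mul, hφ0]
  have hsmulr : ∀ (c : E) v w, φ0 v (c • w) = c * φ0 v w := by
    intro c v w
    refine ((hchar v (c • w) _ ?_)).symm
    intro e
    have h : c * φ0 v w * e = φ0 v w * (c * e) := by ring
    rw [h, hφ0, mul_smul, hE]
  have hsym0 : ∀ v w, φ0 v w = φ0 w v := by
    intro v w
    refine hchar w v (φ0 v w) ?_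
    intro e
    rw [hφ0, hE, hsymm]
  have htr : ∀ v w, ψ v w = Algebra.trace ℚ E (φ0 v w) := by
    intro v w
    have := hφ0 v w 1
    simpa using this.symm
  -- package as an E-bilinear map
  let φ : T →ₗ[E] T →ₗ[E] E :=
    { toFun := fun v =>
        { toFun := fun w => φ0 v w
          map_add' := haddr v
          map_smul' := fun c w => by simpa [smul_eq_mul] using hsmulr c v w }
      map_add' := fun v v' => by ext w; simpa using haddl v v' w
      map_smul' := fun c v => by ext w; simpa [smul_eq_mul] using hsmull c v w }
  refine ⟨φ, ⟨hsym0, htr⟩, ?_⟩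
  rintro φ' ⟨hsym', htr'⟩
  ext v w
  show φ' v w = φ0 v w
  refine hchar v w _ (fun e => ?_)
  have h1 : φ' (e • v) w = φ' v w * e := by
    rw [map_smul]; simp [smul_eq_mul, mul_comm]
  rw [← h1, ← htr']
end

section
/- Let Y be a finite-dimensional complex vector space and r, s non-negative integers. The space of GL(Y)-invariant linear maps Y^{⊗r} ⊗ (Y^*)^{⊗s} → ℂ is zero unless r = s, and when r = s it is spanned by the complete contractions: for each permutation σ ∈ S_r, the map sending v_1 ⊗ ⋯ ⊗ v_r ⊗ μ_1 ⊗ ⋯ ⊗ μ_r to ∏_i μ_i(v_{σ(i)}). -/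
open PiTensorProduct
open scoped TensorProduct

namespace FFTAux

variable {Y : Type*} [AddCommGroup Y] [Module ℂ Y]

/-- The natural pairing `Y^{⊗r} → (Y^*)^{⊗r} → ℂ`. -/
noncomputable def pairB (r : ℕ) (Y : Type*) [AddCommGroup Y] [Module ℂ Y] :
    (⨂[ℂ] _ : Fin r, Y) →ₗ[ℂ] (⨂[ℂ] _ : Fin r, Module.Dual ℂ Y) →ₗ[ℂ] ℂ :=
  (((PiTensorProduct.map₂ (fun _ : Fin r =>
      (LinearMap.id : Module.Dual ℂ Y →ₗ[ℂ] (Y →ₗ[ℂ] ℂ)))).compr₂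
    (PiTensorProduct.lift (MultilinearMap.mkPiAlgebra ℂ (Fin r) ℂ)))).flip

@[simp] lemma pairB_tprod (r : ℕ) (v : Fin r → Y) (μ : Fin r → Module.Dual ℂ Y) :
    pairB r Y (tprod ℂ v) (tprod ℂ μ) = ∏ i, μ i (v i) := by
  simp [pairB, PiTensorProduct.map₂_tprod_tprod]

/-- tprods of basis vectors span the tensor power. -/
lemma span_tprod_basis {κ : Type*} [Fintype κ] (r : ℕ) (b : Module.Basis κ ℂ Y) :
    Submodule.span ℂ (Set.range fun j : Fin r → κ => tprod ℂ fun i => b (j i)) = ⊤ := by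
  rw [Submodule.eq_top_iff']
  intro x
  induction x using PiTensorProduct.induction_on with
  | smul_tprod c v =>
    apply Submodule.smul_mem
    have hv : ∀ i : Fin r, v i = ∑ j : κ, b.repr (v i) j • b j := by
      intro i; rw [Module.Basis.sum_repr]
    have hcalc : (PiTensorProduct.tprod ℂ (s := fun _ : Fin r => Y)) v = ∑ φ ∈ Fintype.piFinset (fun _ : Fin r => (Finset.univ : Finset κ)),
            (∏ i, b.repr (v i) (φ i)) • ((PiTensorProduct.tprod ℂ) fun i => b (φ i)) := by
      calc (PiTensorProduct.tprod ℂ) v = (PiTensorProduct.tprod ℂ) fun i => ∑ j : κ, b.repr (v i) j • b j := by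
            congr 1; funext i; exact hv i
      _ = ∑ φ ∈ Fintype.piFinset (fun _ : Fin r => (Finset.univ : Finset κ)),
            (PiTensorProduct.tprod ℂ : MultilinearMap ℂ (fun _ : Fin r => Y) _)
              fun i => b.repr (v i) (φ i) • b (φ i) := by
          classical
          exact (PiTensorProduct.tprod ℂ : MultilinearMap ℂ (fun _ : Fin r => Y) _).map_sum_finset
            (fun i j => b.repr (v i) j • b j) (fun _ => Finset.univ)
      _ = ∑ φ ∈ Fintype.piFinset (fun _ : Fin r => (Finset.univ : Finset κ)),
            (∏ i, b.repr (v i) (φ i)) • (PiTensorProduct.tprod ℂ) fun i => b (φ i) := by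
          refine Finset.sum_congr rfl fun φ _ => ?_
          exact MultilinearMap.map_smul_univ _ (fun i => b.repr (v i) (φ i)) fun i => b (φ i)
    rw [hcalc]
    apply Submodule.sum_mem
    intro φ _
    exact Submodule.smul_mem _ _ (Submodule.subset_span ⟨φ, rfl⟩)
  | add x y hx hy => exact Submodule.add_mem _ hx hy


/-- Polarization: the symmetrization of a multilinear map is a combination of diagonal values. -/
lemma polarization {W Z : Type*} [AddCommGroup W] [Module ℂ W] [AddCommGroup Z] [Module ℂ Z]
    {r : ℕ} (G : MultilinearMap ℂ (fun _ : Fin r => W) Z) (B : Fin r → W) :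
    ∑ σ : Equiv.Perm (Fin r), G (fun i => B (σ i)) =
      ∑ S : Finset (Fin r), ((-1 : ℂ) ^ (r - S.card)) • G (fun _ => ∑ i ∈ S, B i) := by
  classical
  have step1 : ∀ S : Finset (Fin r), G (fun _ => ∑ i ∈ S, B i)
      = ∑ φ ∈ Fintype.piFinset (fun _ : Fin r => S), G (fun i => B (φ i)) := by
    intro S
    exact G.map_sum_finset (fun _ j => B j) (fun _ => S)
  have step2 : ∀ S : Finset (Fin r),
      Fintype.piFinset (fun _ : Fin r => S)
        = Finset.univ.filter (fun φ : Fin r → Fin r => ∀ i, φ i ∈ S) := by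
    intro S; ext φ; simp [Fintype.mem_piFinset]
  calc ∑ σ : Equiv.Perm (Fin r), G (fun i => B (σ i))
      = ∑ φ ∈ Finset.univ.filter (fun φ : Fin r → Fin r => Function.Surjective φ),
          G (fun i => B (φ i)) := by
        refine Finset.sum_bij
          (i := fun (σ : Equiv.Perm (Fin r)) (_ : σ ∈ Finset.univ) => (σ : Fin r → Fin r))
          ?_ ?_ ?_ ?_
        · intro σ _
          simp [Finset.mem_filter, σ.surjective]
        · intro σ _ τ _ h
          exact Equiv.coe_fn_injective h
        · intro φ hφ
          have hsurj : Function.Surjective φ := (Finset.mem_filter.mp hφ).2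
          have hbij : Function.Bijective φ := Finite.surjective_iff_bijective.mp hsurj
          exact ⟨Equiv.ofBijective φ hbij, Finset.mem_univ _, rfl⟩
        · intro σ _
          rfl
    _ = ∑ φ : Fin r → Fin r,
          (if Function.Surjective φ then (1 : ℂ) else 0) • G (fun i => B (φ i)) := by
        rw [Finset.sum_filter]
        refine Finset.sum_congr rfl fun φ _ => ?_
        split <;> simp
    _ = ∑ φ : Fin r → Fin r, (∑ S : Finset (Fin r),
          if ∀ i, φ i ∈ S then ((-1 : ℂ) ^ (r - S.card)) else 0) • G (fun i => B (φ i)) := by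
        refine Finset.sum_congr rfl fun φ _ => ?_
        congr 1
        -- inclusion-exclusion coefficient
        have himg : ∀ S : Finset (Fin r), (∀ i, φ i ∈ S) ↔ Finset.univ.image φ ⊆ S := by
          intro S; rw [Finset.image_subset_iff]; simp
        rw [Finset.sum_congr rfl (fun S _ => by rw [if_congr (himg S) rfl rfl])]
        rw [← Finset.sum_filter]
        have hbij : ∑ S ∈ Finset.univ.filter (fun S => Finset.univ.image φ ⊆ S),
            ((-1 : ℂ) ^ (r - S.card))
            = ∑ T ∈ (Finset.univ.image φ)ᶜ.powerset, ((-1 : ℂ) ^ T.card) := by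
          refine Finset.sum_nbij' (fun S => Sᶜ) (fun T => Tᶜ) ?_ ?_ ?_ ?_ ?_
          · intro S hS
            rw [Finset.mem_powerset]
            exact Finset.compl_subset_compl.mpr (Finset.mem_filter.mp hS).2
          · intro T hT
            rw [Finset.mem_filter]
            refine ⟨Finset.mem_univ _, ?_⟩
            have := Finset.mem_powerset.mp hT
            simpa using Finset.compl_subset_compl.mpr this
          · intro S _; simp
          · intro T _; simp
          · intro S _
            congr 1
            rw [Finset.card_compl, Fintype.card_fin]
        rw [hbij]
        have : ∑ T ∈ (Finset.univ.image φ)ᶜ.powerset, ((-1 : ℂ) ^ T.card)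
            = (((∑ T ∈ (Finset.univ.image φ)ᶜ.powerset, ((-1 : ℤ) ^ T.card)) : ℤ) : ℂ) := by
          push_cast; rfl
        rw [this, Finset.sum_powerset_neg_one_pow_card]
        by_cases hsurj : Function.Surjective φ
        · rw [if_pos hsurj]
          have : (Finset.univ.image φ)ᶜ = (∅ : Finset (Fin r)) := by
            rw [Finset.compl_eq_empty_iff]
            ext y
            simpa [Finset.mem_image] using hsurj y
          rw [if_pos this]; norm_num
        · rw [if_neg hsurj]
          have : ¬ ((Finset.univ.image φ)ᶜ = (∅ : Finset (Fin r))) := by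
            intro hc
            rw [Finset.compl_eq_empty_iff] at hc
            apply hsurj
            intro y
            have : y ∈ Finset.univ.image φ := by rw [hc]; exact Finset.mem_univ _
            obtain ⟨x, _, hx⟩ := Finset.mem_image.mp this
            exact ⟨x, hx⟩
          rw [if_neg this]; norm_num
    _ = ∑ φ : Fin r → Fin r, ∑ S : Finset (Fin r),
          (if ∀ i, φ i ∈ S then ((-1 : ℂ) ^ (r - S.card)) else 0) • G (fun i => B (φ i)) := by
        refine Finset.sum_congr rfl fun φ _ => ?_
        rw [Finset.sum_smul]
    _ = ∑ S : Finset (Fin r), ((-1 : ℂ) ^ (r - S.card)) • G (fun _ => ∑ i ∈ S, B i) := by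
        rw [Finset.sum_comm]
        refine Finset.sum_congr rfl fun S _ => ?_
        rw [step1 S, step2 S, Finset.smul_sum, Finset.sum_filter]
        refine Finset.sum_congr rfl fun φ _ => ?_
        rw [ite_smul, zero_smul]

/-- Double centralizer property for a finite group acting on a complex vector space:
an operator commuting with everything that commutes with the group action lies in the
span of the group action operators. -/
lemma double_centralizer {M : Type*} [AddCommGroup M] [Module ℂ M]
    {G : Type*} [Group G] [Fintype G] (ρ : G →* Module.End ℂ M)
    {κ : Type*} [Fintype κ] [DecidableEq κ] (v : κ → M)
    (hv : Submodule.span ℂ (Set.range v) = ⊤)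
    (T : Module.End ℂ M)
    (hT : ∀ φ : Module.End ℂ M, (∀ g, ρ g * φ = φ * ρ g) → T * φ = φ * T) :
    T ∈ Submodule.span ℂ (Set.range ρ) := by
  classical
  set ρ' : G → ((κ → M) →ₗ[ℂ] (κ → M)) := fun g => (ρ g).compLeft κ with hρ'
  have hρ'apply : ∀ g (x : κ → M) (i : κ), ρ' g x i = ρ g (x i) := fun g x i => rfl
  have hρ'mul : ∀ g h (x : κ → M), ρ' g (ρ' h x) = ρ' (g * h) x := by
    intro g h x; funext i
    simp only [hρ'apply, _root_.map_mul, Module.End.mul_apply]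
  have hρ'one : ∀ x : κ → M, ρ' 1 x = x := by
    intro x; funext i; simp only [hρ'apply, _root_.map_one, Module.End.one_apply]
  set K : Submodule ℂ (κ → M) := Submodule.span ℂ (Set.range fun g : G => ρ' g v) with hK
  have hKinv : ∀ g, ∀ x ∈ K, ρ' g x ∈ K := by
    intro g x hx
    induction hx using Submodule.span_induction with
    | mem y hy =>
      obtain ⟨h, rfl⟩ := hy
      rw [hρ'mul]
      exact Submodule.subset_span ⟨g * h, rfl⟩
    | zero => rw [map_zero]; exact K.zero_mem
    | add y z _ _ hy hz => rw [map_add]; exact K.add_mem hy hz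
    | smul c y _ hy => rw [map_smul]; exact K.smul_mem c hy
  obtain ⟨q, hq⟩ := Submodule.exists_isCompl K
  set π₀ : (κ → M) →ₗ[ℂ] (κ → M) := K.subtype.comp (Submodule.projectionOnto K q hq)
    with hπ₀
  have hπ₀fix : ∀ x ∈ K, π₀ x = x := by
    intro x hx
    simp only [hπ₀, LinearMap.coe_comp, Function.comp_apply, Submodule.coe_subtype]
    rw [Submodule.projectionOnto_apply_left hq ⟨x, hx⟩]
  have hπ₀K : ∀ x, π₀ x ∈ K := fun x => (Submodule.linearProjOfIsCompl K q hq x).2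
  set π : (κ → M) →ₗ[ℂ] (κ → M) :=
    (Fintype.card G : ℂ)⁻¹ • ∑ g : G, (ρ' g) ∘ₗ π₀ ∘ₗ (ρ' g⁻¹) with hπ
  have hcard : (Fintype.card G : ℂ) ≠ 0 := by
    exact_mod_cast Fintype.card_ne_zero
  have hπapply : ∀ x, π x = (Fintype.card G : ℂ)⁻¹ • ∑ g : G, ρ' g (π₀ (ρ' g⁻¹ x)) := by
    intro x
    simp only [hπ, LinearMap.smul_apply, LinearMap.sum_apply, LinearMap.coe_comp,
      Function.comp_apply]
  have hπfix : ∀ x ∈ K, π x = x := by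
    intro x hx
    rw [hπapply]
    have : ∀ g : G, ρ' g (π₀ (ρ' g⁻¹ x)) = x := by
      intro g
      rw [hπ₀fix _ (hKinv g⁻¹ x hx), hρ'mul, mul_inv_cancel, hρ'one]
    rw [Finset.sum_congr rfl fun g _ => this g, Finset.sum_const, Finset.card_univ,
      ← Nat.cast_smul_eq_nsmul ℂ, smul_smul, inv_mul_cancel₀ hcard, one_smul]
  have hπK : ∀ x, π x ∈ K := by
    intro x
    rw [hπapply]
    exact K.smul_mem _ (Submodule.sum_mem _ fun g _ => hKinv g _ (hπ₀K _))
  have hπcomm : ∀ h, ρ' h ∘ₗ π = π ∘ₗ ρ' h := by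
    intro h
    apply LinearMap.ext
    intro x
    simp only [LinearMap.coe_comp, Function.comp_apply]
    rw [hπapply, hπapply, map_smul, map_sum]
    congr 1
    refine Finset.sum_equiv (Equiv.mulLeft h) (fun g => by simp) ?_
    intro g _
    simp only [Equiv.coe_mulLeft]
    calc ρ' h (ρ' g (π₀ (ρ' g⁻¹ x))) = ρ' (h * g) (π₀ (ρ' g⁻¹ x)) := hρ'mul h g _
      _ = ρ' (h * g) (π₀ (ρ' (h * g)⁻¹ (ρ' h x))) := by
          rw [hρ'mul, mul_inv_rev, inv_mul_cancel_right]
  have hπcomm' : ∀ h, ρ' h ∘ₗ π = π ∘ₗ ρ' h := hπcomm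
  set T' : (κ → M) →ₗ[ℂ] (κ → M) := T.compLeft κ with hT'def
  have hT'apply : ∀ (x : κ → M) (i : κ), T' x i = T (x i) := fun x i => rfl
  have hT'comm : ∀ Φ : (κ → M) →ₗ[ℂ] (κ → M), (∀ g, ρ' g ∘ₗ Φ = Φ ∘ₗ ρ' g) →
      ∀ x, T' (Φ x) = Φ (T' x) := by
    intro Φ hΦ x
    set Φij : κ → κ → Module.End ℂ M := fun i j =>
      (LinearMap.proj i).comp (Φ.comp (LinearMap.single ℂ (fun _ : κ => M) j)) with hΦij
    have hΦijapply : ∀ i j y, Φij i j y = Φ (Pi.single j y) i := fun i j y => rfl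
    have hΦijcomm : ∀ i j g, ρ g * Φij i j = Φij i j * ρ g := by
      intro i j g
      apply LinearMap.ext
      intro y
      simp only [Module.End.mul_apply, hΦijapply]
      have h1 : (Pi.single j (ρ g y) : κ → M) = ρ' g (Pi.single j y) := by
        funext i'
        rw [hρ'apply]
        by_cases hij : i' = j
        · subst hij; simp
        · simp [Pi.single_apply, hij]
      have h2 := LinearMap.congr_fun (hΦ g) (Pi.single j y)
      simp only [LinearMap.coe_comp, Function.comp_apply] at h2
      calc (ρ g) (Φ (Pi.single j y) i) = (ρ' g (Φ (Pi.single j y))) i := rfl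
        _ = (Φ (ρ' g (Pi.single j y))) i := by rw [h2]
        _ = Φ (Pi.single j ((ρ g) y)) i := by rw [← h1]
    have hTij : ∀ i j y, T (Φij i j y) = Φij i j (T y) := by
      intro i j y
      exact LinearMap.congr_fun (hT (Φij i j) (fun g => hΦijcomm i j g)) y
    have hdecomp : ∀ (z : κ → M) (i : κ), Φ z i = ∑ j, Φij i j (z j) := by
      intro z i
      conv_lhs => rw [← Finset.univ_sum_single z]
      rw [map_sum]
      simp only [Finset.sum_apply]
      exact Finset.sum_congr rfl fun j _ => rfl
    funext i
    rw [hT'apply, hdecomp, hdecomp]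
    rw [map_sum]
    exact Finset.sum_congr rfl fun j _ => by rw [hTij, hT'apply]
  have hvK : v ∈ K := by
    have h1 : ρ' 1 v = v := hρ'one v
    exact h1 ▸ Submodule.subset_span ⟨1, rfl⟩
  have hTm : T' v ∈ K := by
    have h1 : T' v = T' (π v) := by rw [hπfix v hvK]
    have h2 : T' (π v) = π (T' v) := by
      have := hT'comm π hπcomm v
      rw [this]
    rw [h1, h2]
    exact hπK _
  rw [hK, Submodule.mem_span_range_iff_exists_fun] at hTm
  obtain ⟨c, hc⟩ := hTm
  have hTS : T = ∑ g : G, c g • ρ g := by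
    apply LinearMap.ext_on hv
    rintro _ ⟨i, rfl⟩
    have hci := congrFun hc i
    simp only [Finset.sum_apply, Pi.smul_apply] at hci
    rw [LinearMap.sum_apply]
    calc T (v i) = T' v i := rfl
      _ = ∑ g : G, c g • ρ' g v i := hci.symm
      _ = ∑ g : G, (c g • ρ g) (v i) := by
          refine Finset.sum_congr rfl fun g _ => ?_
          rw [LinearMap.smul_apply, hρ'apply]
  rw [hTS]
  exact Submodule.sum_mem _ fun g _ =>
    Submodule.smul_mem _ _ (Submodule.subset_span ⟨g, rfl⟩)

section Fixed

variable {Y : Type*} [AddCommGroup Y] [Module ℂ Y] [FiniteDimensional ℂ Y] {r : ℕ}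

local notation "n" => Module.finrank ℂ Y
local notation "bY" => Module.finBasis ℂ Y

/-- product of dual basis evaluations is a Kronecker delta -/
lemma prod_delta (j k : Fin r → Fin n) :
    ∏ i, (Module.finBasis ℂ Y).coord (k i) ((Module.finBasis ℂ Y) (j i))
      = (if j = k then (1 : ℂ) else 0) := by
  classical
  by_cases h : j = k
  · subst h
    simp
  · obtain ⟨i0, hi0⟩ : ∃ i, j i ≠ k i := by
      by_contra hc
      push_neg at hc
      exact h (funext hc)
    rw [if_neg h]
    apply Finset.prod_eq_zero (Finset.mem_univ i0)
    rw [Module.Basis.coord_apply, Module.Basis.repr_self, Finsupp.single_apply, if_neg (by simpa using hi0)]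

lemma pairB_basis_delta (j k : Fin r → Fin n) :
    pairB r Y ((PiTensorProduct.tprod ℂ) fun i => (Module.finBasis ℂ Y) (j i))
      ((PiTensorProduct.tprod ℂ) fun i => (Module.finBasis ℂ Y).coord (k i))
      = (if j = k then (1 : ℂ) else 0) := by
  rw [pairB_tprod]
  exact prod_delta j k

/-- nondegeneracy of the pairing in its first argument -/
lemma pairB_nondegenerate (x : ⨂[ℂ] _ : Fin r, Y)
    (hx : ∀ w : ⨂[ℂ] _ : Fin r, Module.Dual ℂ Y, pairB r Y x w = 0) : x = 0 := by
  classical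
  have hxmem : x ∈ Submodule.span ℂ
      (Set.range fun j : Fin r → Fin n => (PiTensorProduct.tprod ℂ) fun i =>
        (Module.finBasis ℂ Y) (j i)) := by
    rw [span_tprod_basis r (Module.finBasis ℂ Y)]; trivial
  rw [Submodule.mem_span_range_iff_exists_fun] at hxmem
  obtain ⟨c, hc⟩ := hxmem
  have hck : ∀ k : Fin r → Fin n, c k = 0 := by
    intro k
    have := hx ((PiTensorProduct.tprod ℂ) fun i => (Module.finBasis ℂ Y).coord (k i))
    rw [← hc] at this
    simp only [map_sum, map_smul, LinearMap.sum_apply, LinearMap.smul_apply] at this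
    rw [Finset.sum_congr rfl (fun j _ => by rw [pairB_basis_delta j k])] at this
    simpa using this
  rw [← hc]
  simp [hck]

/-- every functional on the mixed tensor space comes from an operator via the pairing -/
lemma exists_operator (f : ((⨂[ℂ] _ : Fin r, Y) ⊗[ℂ] (⨂[ℂ] _ : Fin r, Module.Dual ℂ Y)) →ₗ[ℂ] ℂ) :
    ∃ T : Module.End ℂ (⨂[ℂ] _ : Fin r, Y),
      ∀ (x : ⨂[ℂ] _ : Fin r, Y) (w : ⨂[ℂ] _ : Fin r, Module.Dual ℂ Y),
        f (x ⊗ₜ w) = pairB r Y (T x) w := by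
  classical
  set db := (Module.finBasis ℂ Y).dualBasis with hdb
  refine ⟨∑ k : Fin r → Fin n,
    ((f.comp ((TensorProduct.mk ℂ _ _).flip
        ((PiTensorProduct.tprod ℂ) fun i => db (k i)))).smulRight
      ((PiTensorProduct.tprod ℂ) fun i => (Module.finBasis ℂ Y) (k i))), ?_⟩
  intro x w
  have hspan : Submodule.span ℂ
      (Set.range fun k : Fin r → Fin n => (PiTensorProduct.tprod ℂ) fun i => db (k i)) = ⊤ :=
    span_tprod_basis r db
  -- both sides are linear in w; check on spanning set
  have main : f.comp ((TensorProduct.mk ℂ _ _) x)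
      = (pairB r Y ((∑ k : Fin r → Fin n,
        ((f.comp ((TensorProduct.mk ℂ _ _).flip
            ((PiTensorProduct.tprod ℂ) fun i => db (k i)))).smulRight
          ((PiTensorProduct.tprod ℂ) fun i => (Module.finBasis ℂ Y) (k i)))) x)) := by
    apply LinearMap.ext_on hspan
    rintro _ ⟨l, rfl⟩
    simp only [LinearMap.coe_comp, Function.comp_apply, TensorProduct.mk_apply,
      LinearMap.sum_apply, LinearMap.smulRight_apply, map_sum, map_smul, LinearMap.smul_apply]
    have : ∀ k : Fin r → Fin n,
        pairB r Y ((PiTensorProduct.tprod ℂ) fun i => (Module.finBasis ℂ Y) (k i))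
          ((PiTensorProduct.tprod ℂ) fun i => db (l i)) = (if k = l then (1:ℂ) else 0) := by
      intro k
      rw [hdb]
      have : ((PiTensorProduct.tprod ℂ (s := fun _ : Fin r => Module.Dual ℂ Y))
          fun i => (Module.finBasis ℂ Y).dualBasis (l i))
          = (PiTensorProduct.tprod ℂ) fun i => (Module.finBasis ℂ Y).coord (l i) := by
        congr 1; funext i; rw [← Module.Basis.coe_dualBasis]
      rw [this, pairB_basis_delta k l]
    rw [Finset.sum_congr rfl (fun k _ => by rw [this k])]
    simp
  have := LinearMap.congr_fun main w
  simpa using this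


/-- helper: linear maps out of a tensor power agree if they agree on pure tensors -/
lemma tp_ext {P : Type*} [AddCommGroup P] [Module ℂ P]
    {g h : (⨂[ℂ] _ : Fin r, Y) →ₗ[ℂ] P}
    (H : ∀ v : Fin r → Y, g ((PiTensorProduct.tprod ℂ) v) = h ((PiTensorProduct.tprod ℂ) v)) :
    g = h :=
  PiTensorProduct.ext (MultilinearMap.ext H)

lemma tp_ext' {P : Type*} [AddCommGroup P] [Module ℂ P]
    {g h : (⨂[ℂ] _ : Fin r, Module.Dual ℂ Y) →ₗ[ℂ] P}
    (H : ∀ μ : Fin r → Module.Dual ℂ Y,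
      g ((PiTensorProduct.tprod ℂ) μ) = h ((PiTensorProduct.tprod ℂ) μ)) :
    g = h :=
  PiTensorProduct.ext (MultilinearMap.ext H)

/-- the permutation representation on the tensor power -/
noncomputable def permRep : Equiv.Perm (Fin r) →* Module.End ℂ (⨂[ℂ] _ : Fin r, Y) where
  toFun σ := (PiTensorProduct.reindex ℂ (fun _ : Fin r => Y) σ).toLinearMap
  map_one' := by
    apply tp_ext
    intro v
    simp [PiTensorProduct.reindex_tprod, Equiv.Perm.one_symm]
  map_mul' σ τ := by
    apply tp_ext
    intro v
    simp only [LinearEquiv.coe_coe, Module.End.mul_apply, PiTensorProduct.reindex_tprod]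
    congr 1

lemma permRep_tprod (σ : Equiv.Perm (Fin r)) (v : Fin r → Y) :
    (permRep (r := r) (Y := Y) σ) ((PiTensorProduct.tprod ℂ) v)
      = (PiTensorProduct.tprod ℂ) fun i => v (σ.symm i) := by
  simp [permRep, PiTensorProduct.reindex_tprod]

/-- compatibility of the pairing with diagonal power operators -/
lemma pairB_pw (A : Module.End ℂ Y) (x : ⨂[ℂ] _ : Fin r, Y)
    (w : ⨂[ℂ] _ : Fin r, Module.Dual ℂ Y) :
    pairB r Y (PiTensorProduct.map (fun _ : Fin r => A) x) w
      = pairB r Y x (PiTensorProduct.map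
          (fun _ : Fin r => (LinearMap.lcomp ℂ ℂ A : Module.Dual ℂ Y →ₗ[ℂ] Module.Dual ℂ Y)) w) := by
  have key : (pairB r Y).comp (PiTensorProduct.map (fun _ : Fin r => A))
      = (pairB r Y).compl₂ (PiTensorProduct.map
          (fun _ : Fin r => (LinearMap.lcomp ℂ ℂ A : Module.Dual ℂ Y →ₗ[ℂ] Module.Dual ℂ Y))) := by
    apply tp_ext
    intro v
    apply tp_ext'
    intro μ
    simp only [LinearMap.coe_comp, Function.comp_apply, LinearMap.compl₂_apply,
      PiTensorProduct.map_tprod, pairB_tprod, LinearMap.lcomp_apply]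
  have h1 := LinearMap.congr_fun key x
  exact LinearMap.congr_fun h1 w

/-- reconstruction of the identity from basis tensors and the pairing -/
lemma id_eq_sum : (LinearMap.id : Module.End ℂ (⨂[ℂ] _ : Fin r, Y))
    = ∑ j : Fin r → Fin n,
        (((pairB r Y).flip ((PiTensorProduct.tprod ℂ) fun i =>
            (Module.finBasis ℂ Y).coord (j i))).smulRight
          ((PiTensorProduct.tprod ℂ) fun i => (Module.finBasis ℂ Y) (j i))) := by
  classical
  apply LinearMap.ext_on (span_tprod_basis r (Module.finBasis ℂ Y))
  rintro _ ⟨k, rfl⟩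
  simp only [LinearMap.id_apply, LinearMap.sum_apply, LinearMap.smulRight_apply,
    LinearMap.flip_apply]
  rw [Finset.sum_congr rfl (fun j _ => by rw [pairB_basis_delta k j, ite_smul, one_smul,
    zero_smul])]
  simp

/-- every endomorphism of the tensor power lies in the span of the pure tensor operators -/
lemma end_mem_span_map (ψ : Module.End ℂ (⨂[ℂ] _ : Fin r, Y)) :
    ψ ∈ Submodule.span ℂ {E : Module.End ℂ (⨂[ℂ] _ : Fin r, Y) |
      ∃ B : Fin r → Module.End ℂ Y, PiTensorProduct.map B = E} := by
  classical
  have hrep : ψ = ∑ j : Fin r → Fin n,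
      (((pairB r Y).flip ((PiTensorProduct.tprod ℂ) fun i =>
          (Module.finBasis ℂ Y).coord (j i))).smulRight
        (ψ ((PiTensorProduct.tprod ℂ) fun i => (Module.finBasis ℂ Y) (j i)))) := by
    apply LinearMap.ext_on (span_tprod_basis r (Module.finBasis ℂ Y))
    rintro _ ⟨k, rfl⟩
    simp only [LinearMap.sum_apply, LinearMap.smulRight_apply, LinearMap.flip_apply]
    rw [Finset.sum_congr rfl (fun j _ => by rw [pairB_basis_delta k j, ite_smul, one_smul,
      zero_smul])]
    simp
  rw [hrep]
  apply Submodule.sum_mem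
  intro j _
  have hy : ψ ((PiTensorProduct.tprod ℂ) fun i => (Module.finBasis ℂ Y) (j i))
      ∈ Submodule.span ℂ (Set.range fun k : Fin r → Fin n =>
        (PiTensorProduct.tprod ℂ) fun i => (Module.finBasis ℂ Y) (k i)) := by
    rw [span_tprod_basis r (Module.finBasis ℂ Y)]; trivial
  set L := (pairB r Y).flip ((PiTensorProduct.tprod ℂ) fun i =>
      (Module.finBasis ℂ Y).coord (j i)) with hL
  generalize ψ ((PiTensorProduct.tprod ℂ) fun i => (Module.finBasis ℂ Y) (j i)) = y at hy ⊢
  induction hy using Submodule.span_induction with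
  | mem y hy =>
    obtain ⟨k, rfl⟩ := hy
    apply Submodule.subset_span
    refine ⟨fun i => ((Module.finBasis ℂ Y).coord (j i)).smulRight ((Module.finBasis ℂ Y) (k i)), ?_⟩
    apply tp_ext
    intro v
    simp only [PiTensorProduct.map_tprod, LinearMap.smulRight_apply, LinearMap.flip_apply, hL,
      pairB_tprod]
    exact MultilinearMap.map_smul_univ _ (fun i => ((Module.finBasis ℂ Y).coord (j i)) (v i))
      (fun i => (Module.finBasis ℂ Y) (k i))
  | zero =>
    have : L.smulRight (0 : ⨂[ℂ] _ : Fin r, Y) = 0 := by ext x; simp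
    rw [this]; exact Submodule.zero_mem _
  | add y z _ _ hy hz =>
    have : L.smulRight (y + z) = L.smulRight y + L.smulRight z := by ext x; simp [smul_add]
    rw [this]; exact Submodule.add_mem _ hy hz
  | smul c y _ hy =>
    have : L.smulRight (c • y) = c • L.smulRight y := by
      apply LinearMap.ext
      intro x
      show (L x) • (c • y) = c • ((L x) • y)
      rw [smul_comm]
    rw [this]; exact Submodule.smul_mem _ _ hy

/-- conjugating a pure tensor operator by a permutation permutes the factors -/
lemma conj_perm (σ : Equiv.Perm (Fin r)) (B : Fin r → Module.End ℂ Y) :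
    permRep (r := r) (Y := Y) σ * PiTensorProduct.map B * permRep (r := r) (Y := Y) σ⁻¹
      = PiTensorProduct.map (fun i => B (σ.symm i)) := by
  apply tp_ext
  intro v
  simp only [Module.End.mul_apply]
  have h1 : (permRep (r := r) (Y := Y) σ⁻¹) ((PiTensorProduct.tprod ℂ) v)
      = (PiTensorProduct.tprod ℂ) fun i => v (σ i) := by
    rw [permRep_tprod]
    congr 1
  rw [h1, PiTensorProduct.map_tprod, permRep_tprod, PiTensorProduct.map_tprod]
  congr 1
  funext i
  simp

/-- operators commuting with all permutations lie in the span of diagonal power operators -/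
lemma commutant_mem_span_pw (φ : Module.End ℂ (⨂[ℂ] _ : Fin r, Y))
    (hφ : ∀ σ : Equiv.Perm (Fin r),
      permRep (r := r) (Y := Y) σ * φ = φ * permRep (r := r) (Y := Y) σ) :
    φ ∈ Submodule.span ℂ {E : Module.End ℂ (⨂[ℂ] _ : Fin r, Y) |
      ∃ A : Module.End ℂ Y, PiTensorProduct.map (fun _ : Fin r => A) = E} := by
  classical
  set Γ : Module.End ℂ (⨂[ℂ] _ : Fin r, Y) →ₗ[ℂ] Module.End ℂ (⨂[ℂ] _ : Fin r, Y) :=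
    ∑ σ : Equiv.Perm (Fin r),
      (LinearMap.mulLeft ℂ (permRep (r := r) (Y := Y) σ)).comp
        (LinearMap.mulRight ℂ (permRep (r := r) (Y := Y) σ⁻¹)) with hΓ
  have hΓapply : ∀ ψ, Γ ψ = ∑ σ : Equiv.Perm (Fin r),
      permRep (r := r) (Y := Y) σ * ψ * permRep (r := r) (Y := Y) σ⁻¹ := by
    intro ψ
    simp only [hΓ, LinearMap.sum_apply, LinearMap.coe_comp, Function.comp_apply,
      LinearMap.mulLeft_apply, LinearMap.mulRight_apply]
    exact Finset.sum_congr rfl fun σ _ => by rw [mul_assoc]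
  have hΓφ : Γ φ = ((r.factorial : ℂ)) • φ := by
    rw [hΓapply]
    have : ∀ σ : Equiv.Perm (Fin r),
        permRep (r := r) (Y := Y) σ * φ * permRep (r := r) (Y := Y) σ⁻¹ = φ := by
      intro σ
      rw [hφ σ, mul_assoc, ← _root_.map_mul, mul_inv_cancel, _root_.map_one, mul_one]
    rw [Finset.sum_congr rfl fun σ _ => this σ, Finset.sum_const, Finset.card_univ,
      Fintype.card_perm, Fintype.card_fin, ← Nat.cast_smul_eq_nsmul ℂ]
  have hΓmem : Γ φ ∈ Submodule.span ℂ {E : Module.End ℂ (⨂[ℂ] _ : Fin r, Y) |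
      ∃ A : Module.End ℂ Y, PiTensorProduct.map (fun _ : Fin r => A) = E} := by
    have hφtop := end_mem_span_map (r := r) φ
    have himg : Γ φ ∈ Submodule.map Γ (Submodule.span ℂ
        {E : Module.End ℂ (⨂[ℂ] _ : Fin r, Y) |
          ∃ B : Fin r → Module.End ℂ Y, PiTensorProduct.map B = E}) :=
      Submodule.mem_map_of_mem hφtop
    rw [Submodule.map_span] at himg
    refine Submodule.span_le.mpr ?_ himg
    rintro _ ⟨_, ⟨B, rfl⟩, rfl⟩
    rw [hΓapply]
    have hconj : ∀ σ : Equiv.Perm (Fin r),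
        permRep (r := r) (Y := Y) σ * PiTensorProduct.map B * permRep (r := r) (Y := Y) σ⁻¹
          = PiTensorProduct.map (fun i => B (σ.symm i)) := fun σ => conj_perm σ B
    rw [Finset.sum_congr rfl fun σ _ => hconj σ]
    have hinv : ∑ σ : Equiv.Perm (Fin r), PiTensorProduct.map (fun i => B (σ.symm i))
        = ∑ σ : Equiv.Perm (Fin r), PiTensorProduct.map (fun i => B (σ i)) := by
      refine Finset.sum_equiv (Equiv.inv (Equiv.Perm (Fin r))) (fun σ => by simp) ?_
      intro σ _
      simp only [Equiv.inv_apply]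
      congr 1
    rw [hinv]
    have hpol := polarization
      (PiTensorProduct.mapMultilinear ℂ (fun _ : Fin r => Y) (fun _ : Fin r => Y)) B
    have hG : ∀ C : Fin r → Module.End ℂ Y,
        (PiTensorProduct.mapMultilinear ℂ (fun _ : Fin r => Y) (fun _ : Fin r => Y)) C
          = PiTensorProduct.map C := fun C => rfl
    simp only [hG] at hpol
    rw [hpol]
    apply Submodule.sum_mem
    intro S _
    exact Submodule.smul_mem _ _ (Submodule.subset_span ⟨∑ i ∈ S, B i, rfl⟩)
  have hfac : ((r.factorial : ℂ)) ≠ 0 := by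
    exact_mod_cast r.factorial_ne_zero
  have : φ = ((r.factorial : ℂ))⁻¹ • Γ φ := by
    rw [hΓφ, smul_smul, inv_mul_cancel₀ hfac, one_smul]
  rw [this]
  exact Submodule.smul_mem _ _ hΓmem

end Fixed

section Balanced

variable {Y : Type*} [AddCommGroup Y] [Module ℂ Y] [FiniteDimensional ℂ Y] {r s : ℕ}

/-- A `GL`-invariant functional is balanced for all endomorphisms, by Zariski density
(polynomial argument). -/
lemma invariant_balanced
    (f : ((⨂[ℂ] _ : Fin r, Y) ⊗[ℂ] (⨂[ℂ] _ : Fin s, Module.Dual ℂ Y)) →ₗ[ℂ] ℂ)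
    (hf : ∀ (g : Y ≃ₗ[ℂ] Y) (v : Fin r → Y) (μ : Fin s → Module.Dual ℂ Y),
        f (((PiTensorProduct.tprod ℂ) fun i => g (v i)) ⊗ₜ
            ((PiTensorProduct.tprod ℂ) fun i => (μ i).comp g.symm.toLinearMap))
          = f (((PiTensorProduct.tprod ℂ) v) ⊗ₜ ((PiTensorProduct.tprod ℂ) μ)))
    (A : Module.End ℂ Y) (v : Fin r → Y) (μ : Fin s → Module.Dual ℂ Y) :
    f (((PiTensorProduct.tprod ℂ) fun i => A (v i)) ⊗ₜ ((PiTensorProduct.tprod ℂ) μ))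
      = f (((PiTensorProduct.tprod ℂ) v) ⊗ₜ
          ((PiTensorProduct.tprod ℂ) fun i => (μ i).comp (A : Y →ₗ[ℂ] Y))) := by
  classical
  -- invariance in the convenient form
  have hyp' : ∀ g : Y ≃ₗ[ℂ] Y,
      f (((PiTensorProduct.tprod ℂ) fun i => g (v i)) ⊗ₜ ((PiTensorProduct.tprod ℂ) μ))
        = f (((PiTensorProduct.tprod ℂ) v) ⊗ₜ
            ((PiTensorProduct.tprod ℂ) fun i => (μ i).comp g.toLinearMap)) := by
    intro g
    have := hf g v (fun i => (μ i).comp g.toLinearMap)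
    have hsimp : (fun i => ((μ i).comp g.toLinearMap).comp g.symm.toLinearMap) = μ := by
      funext i
      apply LinearMap.ext
      intro x
      simp
    rw [hsimp] at this
    exact this
  -- the two multilinear maps in the endomorphism variables
  set G : MultilinearMap ℂ (fun _ : Fin r => Module.End ℂ Y) ℂ :=
    (f.comp ((TensorProduct.mk ℂ (⨂[ℂ] _ : Fin r, Y)
        (⨂[ℂ] _ : Fin s, Module.Dual ℂ Y)).flip ((PiTensorProduct.tprod ℂ) μ))).compMultilinearMap
      ((PiTensorProduct.tprod ℂ (s := fun _ : Fin r => Y)).compLinearMap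
        (fun i => LinearMap.applyₗ (v i))) with hG
  set H : MultilinearMap ℂ (fun _ : Fin s => Module.End ℂ Y) ℂ :=
    (f.comp ((TensorProduct.mk ℂ (⨂[ℂ] _ : Fin r, Y)
        (⨂[ℂ] _ : Fin s, Module.Dual ℂ Y)) ((PiTensorProduct.tprod ℂ) v))).compMultilinearMap
      ((PiTensorProduct.tprod ℂ (s := fun _ : Fin s => Module.Dual ℂ Y)).compLinearMap
        (fun i => LinearMap.llcomp ℂ Y Y ℂ (μ i))) with hH
  have hGapply : ∀ B : Fin r → Module.End ℂ Y,
      G B = f (((PiTensorProduct.tprod ℂ) fun i => B i (v i)) ⊗ₜ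
        ((PiTensorProduct.tprod ℂ) μ)) := fun B => rfl
  have hHapply : ∀ B : Fin s → Module.End ℂ Y,
      H B = f (((PiTensorProduct.tprod ℂ) v) ⊗ₜ
        ((PiTensorProduct.tprod ℂ) fun i => (μ i).comp (B i))) := fun B => rfl
  -- scaling behaviour on piecewise families
  have hscaleG : ∀ (t : ℂ) (S : Finset (Fin r)),
      G (S.piecewise (fun _ => t • (1 : Module.End ℂ Y)) (fun _ => A))
        = t ^ S.card • G (S.piecewise (fun _ => (1 : Module.End ℂ Y)) (fun _ => A)) := by
    intro t S
    have h := G.map_piecewise_smul (fun _ => t)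
      (S.piecewise (fun _ => (1 : Module.End ℂ Y)) (fun _ => A)) S
    have harg : S.piecewise
          (fun i => t • (S.piecewise (fun _ => (1 : Module.End ℂ Y)) (fun _ => A)) i)
          (S.piecewise (fun _ => (1 : Module.End ℂ Y)) (fun _ => A))
        = S.piecewise (fun _ => t • (1 : Module.End ℂ Y)) (fun _ => A) := by
      funext i
      by_cases hi : i ∈ S
      · rw [Finset.piecewise_eq_of_mem _ _ _ hi, Finset.piecewise_eq_of_mem _ _ _ hi,
          Finset.piecewise_eq_of_mem _ _ _ hi]
      · simp [Finset.piecewise_eq_of_notMem, hi]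
    rw [harg] at h
    rw [h, Finset.prod_const]
  have hscaleH : ∀ (t : ℂ) (S : Finset (Fin s)),
      H (S.piecewise (fun _ => t • (1 : Module.End ℂ Y)) (fun _ => A))
        = t ^ S.card • H (S.piecewise (fun _ => (1 : Module.End ℂ Y)) (fun _ => A)) := by
    intro t S
    have h := H.map_piecewise_smul (fun _ => t)
      (S.piecewise (fun _ => (1 : Module.End ℂ Y)) (fun _ => A)) S
    have harg : S.piecewise
          (fun i => t • (S.piecewise (fun _ => (1 : Module.End ℂ Y)) (fun _ => A)) i)
          (S.piecewise (fun _ => (1 : Module.End ℂ Y)) (fun _ => A))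
        = S.piecewise (fun _ => t • (1 : Module.End ℂ Y)) (fun _ => A) := by
      funext i
      by_cases hi : i ∈ S
      · rw [Finset.piecewise_eq_of_mem _ _ _ hi, Finset.piecewise_eq_of_mem _ _ _ hi,
          Finset.piecewise_eq_of_mem _ _ _ hi]
      · simp [Finset.piecewise_eq_of_notMem, hi]
    rw [harg] at h
    rw [h, Finset.prod_const]
  -- expansion in powers of t
  have hexpG : ∀ t : ℂ, G (fun _ => t • (1 : Module.End ℂ Y) + A)
      = ∑ S : Finset (Fin r),
          t ^ S.card • G (S.piecewise (fun _ => (1 : Module.End ℂ Y)) (fun _ => A)) := by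
    intro t
    have h := G.map_add_univ (fun _ => t • (1 : Module.End ℂ Y)) (fun _ => A)
    have harg : (fun _ : Fin r => t • (1 : Module.End ℂ Y)) + (fun _ => A)
        = fun _ => t • (1 : Module.End ℂ Y) + A := rfl
    rw [harg] at h
    rw [h]
    exact Finset.sum_congr rfl fun S _ => hscaleG t S
  have hexpH : ∀ t : ℂ, H (fun _ => t • (1 : Module.End ℂ Y) + A)
      = ∑ S : Finset (Fin s),
          t ^ S.card • H (S.piecewise (fun _ => (1 : Module.End ℂ Y)) (fun _ => A)) := by
    intro t
    have h := H.map_add_univ (fun _ => t • (1 : Module.End ℂ Y)) (fun _ => A)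
    have harg : (fun _ : Fin s => t • (1 : Module.End ℂ Y)) + (fun _ => A)
        = fun _ => t • (1 : Module.End ℂ Y) + A := rfl
    rw [harg] at h
    rw [h]
    exact Finset.sum_congr rfl fun S _ => hscaleH t S
  -- the polynomial difference
  set p : Polynomial ℂ :=
    (∑ S : Finset (Fin r), Polynomial.C
        (G (S.piecewise (fun _ => (1 : Module.End ℂ Y)) (fun _ => A))) * Polynomial.X ^ S.card)
    - (∑ S : Finset (Fin s), Polynomial.C
        (H (S.piecewise (fun _ => (1 : Module.End ℂ Y)) (fun _ => A))) * Polynomial.X ^ S.card)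
    with hp
  have heval : ∀ t : ℂ, p.eval t
      = G (fun _ => t • (1 : Module.End ℂ Y) + A) - H (fun _ => t • (1 : Module.End ℂ Y) + A) := by
    intro t
    rw [hp]
    simp only [Polynomial.eval_sub, Polynomial.eval_finset_sum, Polynomial.eval_mul,
      Polynomial.eval_C, Polynomial.eval_pow, Polynomial.eval_X]
    rw [hexpG t, hexpH t]
    simp [smul_eq_mul, mul_comm]
  -- roots: all t outside the (finite) spectrum of -A
  have hroot : ∀ t : ℂ, t ∉ spectrum ℂ (-A) → p.eval t = 0 := by
    intro t ht
    have hu : IsUnit (t • (1 : Module.End ℂ Y) + A) := by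
      have := spectrum.notMem_iff.mp ht
      rwa [Module.algebraMap_end_eq_smul_id, sub_neg_eq_add, ← Module.End.one_eq_id] at this
    have hbij : Function.Bijective (t • (1 : Module.End ℂ Y) + A) :=
      Module.End.isUnit_iff _ |>.mp hu
    set g : Y ≃ₗ[ℂ] Y := LinearEquiv.ofBijective (t • (1 : Module.End ℂ Y) + A) hbij with hg
    have h1 : G (fun _ => t • (1 : Module.End ℂ Y) + A)
        = f (((PiTensorProduct.tprod ℂ) fun i => g (v i)) ⊗ₜ ((PiTensorProduct.tprod ℂ) μ)) := by
      rw [hGapply]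
      rfl
    have h2 : H (fun _ => t • (1 : Module.End ℂ Y) + A)
        = f (((PiTensorProduct.tprod ℂ) v) ⊗ₜ
            ((PiTensorProduct.tprod ℂ) fun i => (μ i).comp g.toLinearMap)) := by
      rw [hHapply]
      rfl
    rw [heval, h1, h2, hyp' g, sub_self]
  have hinf : {x : ℂ | p.IsRoot x}.Infinite := by
    have hfin := Module.End.finite_spectrum (-A : Module.End ℂ Y)
    have : (spectrum ℂ (-A : Module.End ℂ Y))ᶜ ⊆ {x : ℂ | p.IsRoot x} := by
      intro t ht
      exact hroot t ht
    exact Set.Infinite.mono this (Set.Finite.infinite_compl hfin)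
  have hp0 : p = 0 := Polynomial.eq_zero_of_infinite_isRoot p hinf
  have h0 := heval 0
  rw [hp0] at h0
  simp only [Polynomial.eval_zero, zero_smul, zero_add] at h0
  have := sub_eq_zero.mp h0.symm
  rw [hGapply, hHapply] at this
  exact this

end Balanced

end FFTAux

/-- First fundamental theorem of invariant theory for `GL(Y)`: the space of
`GL(Y)`-invariant linear functionals on `Y^{⊗r} ⊗ (Y^*)^{⊗s}` is zero unless
`r = s`, in which case it is spanned by the complete contractions
`v ⊗ μ ↦ ∏ᵢ μᵢ(v_{σ(i)})` for permutations `σ`. -/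
theorem stmt8 (Y : Type*) [AddCommGroup Y] [Module ℂ Y] [FiniteDimensional ℂ Y]
    (r s : ℕ) :
    {f : (PiTensorProduct ℂ (fun _ : Fin r => Y)) ⊗[ℂ]
          (PiTensorProduct ℂ (fun _ : Fin s => Module.Dual ℂ Y)) →ₗ[ℂ] ℂ |
      ∀ (g : Y ≃ₗ[ℂ] Y) (v : Fin r → Y) (μ : Fin s → Module.Dual ℂ Y),
        f ((tprod ℂ fun i => g (v i)) ⊗ₜ
            (tprod ℂ fun i => (μ i).comp g.symm.toLinearMap))
          = f ((tprod ℂ v) ⊗ₜ (tprod ℂ μ))}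
    = ↑(Submodule.span ℂ
        {c : (PiTensorProduct ℂ (fun _ : Fin r => Y)) ⊗[ℂ]
              (PiTensorProduct ℂ (fun _ : Fin s => Module.Dual ℂ Y)) →ₗ[ℂ] ℂ |
          ∃ σ : Fin s ≃ Fin r,
            ∀ (v : Fin r → Y) (μ : Fin s → Module.Dual ℂ Y),
              c ((tprod ℂ v) ⊗ₜ (tprod ℂ μ)) = ∏ i : Fin s, μ i (v (σ i))}) := by
  classical
  apply Set.eq_of_subset_of_subset
  · -- invariant functionals are spanned by contractions
    intro f hf
    simp only [Set.mem_setOf_eq] at hf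
    simp only [SetLike.mem_coe]
    by_cases hrs : r = s
    · subst hrs
      have hbal := fun (A : Module.End ℂ Y) v μ => FFTAux.invariant_balanced f hf A v μ
      obtain ⟨T, hT⟩ := FFTAux.exists_operator (r := r) f
      have hbil : ∀ (A : Module.End ℂ Y) (x : ⨂[ℂ] _ : Fin r, Y)
          (w : ⨂[ℂ] _ : Fin r, Module.Dual ℂ Y),
          f ((PiTensorProduct.map (fun _ : Fin r => A) x) ⊗ₜ w)
            = f (x ⊗ₜ (PiTensorProduct.map
                (fun _ : Fin r => (LinearMap.lcomp ℂ ℂ A :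
                  Module.Dual ℂ Y →ₗ[ℂ] Module.Dual ℂ Y)) w)) := by
        intro A x w
        have key : (TensorProduct.curry f).comp (PiTensorProduct.map (fun _ : Fin r => A))
            = (TensorProduct.curry f).compl₂ (PiTensorProduct.map
                (fun _ : Fin r => (LinearMap.lcomp ℂ ℂ A :
                  Module.Dual ℂ Y →ₗ[ℂ] Module.Dual ℂ Y))) := by
          apply FFTAux.tp_ext
          intro v
          apply FFTAux.tp_ext'
          intro μ
          simp only [LinearMap.coe_comp, Function.comp_apply, LinearMap.compl₂_apply,
            PiTensorProduct.map_tprod, TensorProduct.curry_apply, LinearMap.lcomp_apply']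
          exact hbal A v μ
        have h1 := LinearMap.congr_fun (LinearMap.congr_fun key x) w
        simpa using h1
      have hTpw : ∀ A : Module.End ℂ Y,
          T * PiTensorProduct.map (fun _ : Fin r => A)
            = PiTensorProduct.map (fun _ : Fin r => A) * T := by
        intro A
        apply LinearMap.ext
        intro x
        have hzero : ∀ w, FFTAux.pairB r Y
            (T (PiTensorProduct.map (fun _ : Fin r => A) x)
              - PiTensorProduct.map (fun _ : Fin r => A) (T x)) w = 0 := by
          intro w
          rw [map_sub, LinearMap.sub_apply]
          have e1 : FFTAux.pairB r Y (T (PiTensorProduct.map (fun _ : Fin r => A) x)) w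
              = f ((PiTensorProduct.map (fun _ : Fin r => A) x) ⊗ₜ w) := (hT _ w).symm
          have e2 := hbil A x w
          have e3 := hT x (PiTensorProduct.map
            (fun _ : Fin r => (LinearMap.lcomp ℂ ℂ A :
              Module.Dual ℂ Y →ₗ[ℂ] Module.Dual ℂ Y)) w)
          have e4 := FFTAux.pairB_pw (r := r) A (T x) w
          rw [e1, e2, e3, ← e4, sub_self]
        have := FFTAux.pairB_nondegenerate _ hzero
        have h5 := sub_eq_zero.mp this
        simpa using h5
      have hTD : ∀ φ : Module.End ℂ (⨂[ℂ] _ : Fin r, Y),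
          (∀ σ : Equiv.Perm (Fin r),
            FFTAux.permRep (r := r) (Y := Y) σ * φ = φ * FFTAux.permRep (r := r) (Y := Y) σ)
          → T * φ = φ * T := by
        have hTspanpw : ∀ ψ ∈ Submodule.span ℂ
            {E : Module.End ℂ (⨂[ℂ] _ : Fin r, Y) |
              ∃ A : Module.End ℂ Y, PiTensorProduct.map (fun _ : Fin r => A) = E},
            T * ψ = ψ * T := by
          intro ψ hmem
          induction hmem using Submodule.span_induction with
          | mem ψ hψ =>
            obtain ⟨A, rfl⟩ := hψ
            exact hTpw A
          | zero => simp
          | add a b _ _ ha hb => rw [mul_add, add_mul, ha, hb]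
          | smul t a _ ha => rw [mul_smul_comm, smul_mul_assoc, ha]
        intro φ hφ
        exact hTspanpw φ (FFTAux.commutant_mem_span_pw φ hφ)
      have hTspan := FFTAux.double_centralizer (FFTAux.permRep (r := r) (Y := Y))
        (fun j : Fin r → Fin (Module.finrank ℂ Y) =>
          (PiTensorProduct.tprod ℂ) fun i => (Module.finBasis ℂ Y) (j i))
        (FFTAux.span_tprod_basis r (Module.finBasis ℂ Y)) T hTD
      rw [Submodule.mem_span_range_iff_exists_fun] at hTspan
      obtain ⟨c, hc⟩ := hTspan
      have hf_eq : f = ∑ σ : Equiv.Perm (Fin r),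
          c σ • TensorProduct.lift ((FFTAux.pairB r Y).comp
            (FFTAux.permRep (r := r) (Y := Y) σ)) := by
        apply TensorProduct.ext'
        intro x w
        rw [hT x w, ← hc]
        simp only [LinearMap.sum_apply, LinearMap.smul_apply, map_sum, LinearMap.coe_sum,
          Finset.sum_apply, Pi.smul_apply, TensorProduct.lift.tmul, LinearMap.coe_comp,
          Function.comp_apply, smul_eq_mul]
        refine Finset.sum_congr rfl fun σ _ => ?_
        rw [map_smul, LinearMap.smul_apply, smul_eq_mul]
      rw [hf_eq]
      apply Submodule.sum_mem
      intro σ _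
      apply Submodule.smul_mem
      apply Submodule.subset_span
      refine ⟨σ.symm, ?_⟩
      intro v μ
      rw [TensorProduct.lift.tmul]
      simp only [LinearMap.coe_comp, Function.comp_apply]
      rw [FFTAux.permRep_tprod, FFTAux.pairB_tprod]
    · -- r ≠ s : the functional must vanish
      have hbal := fun (A : Module.End ℂ Y) v μ => FFTAux.invariant_balanced f hf A v μ
      have hpure : ∀ (v : Fin r → Y) (μ : Fin s → Module.Dual ℂ Y),
          f (((PiTensorProduct.tprod ℂ) v) ⊗ₜ ((PiTensorProduct.tprod ℂ) μ)) = 0 := by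
        intro v μ
        have h2 := hbal ((2 : ℂ) • (1 : Module.End ℂ Y)) v μ
        have e1 : ((PiTensorProduct.tprod ℂ) fun i =>
            ((2 : ℂ) • (1 : Module.End ℂ Y)) (v i)) = ((2 : ℂ) ^ r) • (PiTensorProduct.tprod ℂ) v := by
          have harg : (fun i => ((2 : ℂ) • (1 : Module.End ℂ Y)) (v i))
              = fun i => (2 : ℂ) • v i := by funext i; simp
          rw [harg,
            MultilinearMap.map_smul_univ (PiTensorProduct.tprod ℂ) (fun _ : Fin r => (2 : ℂ)) v]
          simp
        have e2 : ((PiTensorProduct.tprod ℂ) fun i =>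
            (μ i).comp (((2 : ℂ) • (1 : Module.End ℂ Y) : Module.End ℂ Y) : Y →ₗ[ℂ] Y))
            = ((2 : ℂ) ^ s) • (PiTensorProduct.tprod ℂ) μ := by
          have harg : (fun i => (μ i).comp
              (((2 : ℂ) • (1 : Module.End ℂ Y) : Module.End ℂ Y) : Y →ₗ[ℂ] Y))
              = fun i => (2 : ℂ) • μ i := by
            funext i
            apply LinearMap.ext
            intro x
            simp
          rw [harg,
            MultilinearMap.map_smul_univ (PiTensorProduct.tprod ℂ) (fun _ : Fin s => (2 : ℂ)) μ]
          simp
        rw [e1, e2] at h2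
        rw [TensorProduct.smul_tmul] at h2
        rw [TensorProduct.tmul_smul, TensorProduct.tmul_smul, map_smul, map_smul] at h2
        have hne : ((2 : ℂ) ^ r) ≠ ((2 : ℂ) ^ s) := by
          intro hcontra
          apply hrs
          have : ((2 ^ r : ℕ) : ℂ) = ((2 ^ s : ℕ) : ℂ) := by push_cast; exact hcontra
          have h6 : (2 : ℕ) ^ r = 2 ^ s := Nat.cast_injective this
          exact Nat.pow_right_injective (le_refl 2) h6
        have h7 : ((2 : ℂ) ^ r - (2 : ℂ) ^ s) •
            f (((PiTensorProduct.tprod ℂ) v) ⊗ₜ ((PiTensorProduct.tprod ℂ) μ)) = 0 := by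
          rw [sub_smul]
          rw [smul_eq_mul, smul_eq_mul] at h2 ⊢
          rw [h2]
          ring
        rcases smul_eq_zero.mp h7 with h | h
        · exact absurd (sub_eq_zero.mp h) hne
        · exact h
      have hzero : f = 0 := by
        have hcurry : TensorProduct.curry f = 0 := by
          apply FFTAux.tp_ext
          intro v
          apply FFTAux.tp_ext'
          intro μ
          simpa using hpure v μ
        apply TensorProduct.ext'
        intro x w
        have h8 := LinearMap.congr_fun (LinearMap.congr_fun hcurry x) w
        simpa [TensorProduct.curry_apply] using h8
      rw [hzero]
      exact Submodule.zero_mem _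
  · -- contractions are invariant
    intro f hf
    simp only [SetLike.mem_coe] at hf
    simp only [Set.mem_setOf_eq]
    induction hf using Submodule.span_induction with
    | mem c hc =>
      obtain ⟨σ, hσ⟩ := hc
      intro g v μ
      rw [hσ (fun i => g (v i)) (fun i => (μ i).comp g.symm.toLinearMap), hσ v μ]
      refine Finset.prod_congr rfl fun i _ => ?_
      simp
    | zero => intro g v μ; simp
    | add a b _ _ ha hb =>
      intro g v μ
      simp only [LinearMap.add_apply, ha g v μ, hb g v μ]
    | smul t a _ ha =>
      intro g v μ
      simp only [LinearMap.smul_apply, ha g v μ]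
end
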